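/- In the degree-corrected stochastic block model setup with λ_w > 0 and λ_f ≥ 0, the smallest eigenvalue of 𝔏_{w,λ} = I_n − 𝔈_λ𝔈_λ^⊤ satisfies eigmin(𝔏_{w,λ}) ≥ λ_w / (max_k C(k,·)/n_k + λ_w) > 0, and consequently ‖𝔈_λ‖ ≤ √( (max_k C(k,·)/n_k) / (max_k C(k,·)/n_k + λ_w) ) < 1. -/

import Mathlib

open Matrix BigOperators

/-- Spectral (ℓ2 operator) norm of a real matrix. -/
noncomputable def specNorm {m n : ℕ} (A : Matrix (Fin m) (Fin n) ℝ) : ℝ :=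
  ‖LinearMap.toContinuousLinearMap (Matrix.toEuclideanLin A)‖

/-- in the DCSBM with `λ_w > 0` and `λ_f ≥ 0`, the smallest eigenvalue
of `𝔏_{w,λ} = I − 𝔈_λ𝔈_λ^⊤` is at least `λ_w/(max_k C(k,·)/n_k + λ_w) > 0`, and
`‖𝔈_λ‖ ≤ √((max_k C(k,·)/n_k)/(max_k C(k,·)/n_k + λ_w)) < 1`. -/

lemma schur_test {m n : ℕ} (A : Matrix (Fin m) (Fin n) ℝ) (hA : ∀ i j, 0 ≤ A i j)
    (pv : Fin m → ℝ) (qv : Fin n → ℝ) (hpv : ∀ i, 0 < pv i) (hqv : ∀ j, 0 < qv j)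
    (r s : ℝ) (hr : 0 ≤ r)
    (hrow : ∀ i, ∑ j, A i j * qv j ≤ r * pv i)
    (hcol : ∀ j, ∑ i, A i j * pv i ≤ s * qv j)
    (x : Fin n → ℝ) :
    ∑ i, (A.mulVec x i)^2 ≤ r * s * ∑ j, (x j)^2 := by
  have inner_nonneg : ∀ i, 0 ≤ ∑ j, A i j / qv j * x j ^ 2 := by
    intro i
    exact Finset.sum_nonneg fun j _ => mul_nonneg (div_nonneg (hA i j) (hqv j).le) (sq_nonneg _)
  calc ∑ i, (A.mulVec x i)^2
      ≤ ∑ i, (r * pv i) * (∑ j, A i j / qv j * x j ^ 2) := by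
        apply Finset.sum_le_sum
        intro i _
        have hCS := Finset.sum_mul_sq_le_sq_mul_sq Finset.univ
          (fun j => Real.sqrt (A i j * qv j)) (fun j => Real.sqrt (A i j / qv j) * x j)
        have h1 : ∀ j, Real.sqrt (A i j * qv j) * (Real.sqrt (A i j / qv j) * x j)
            = A i j * x j := by
          intro j
          rw [← mul_assoc, ← Real.sqrt_mul (mul_nonneg (hA i j) (hqv j).le)]
          have : A i j * qv j * (A i j / qv j) = (A i j)^2 := by
            rw [div_eq_mul_inv,
              show A i j * qv j * (A i j * (qv j)⁻¹) = A i j * A i j * (qv j * (qv j)⁻¹) by ring,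
              mul_inv_cancel₀ (hqv j).ne', mul_one, sq]
          rw [this, Real.sqrt_sq (hA i j)]
        have h2 : ∀ j, Real.sqrt (A i j * qv j) ^ 2 = A i j * qv j := fun j =>
          Real.sq_sqrt (mul_nonneg (hA i j) (hqv j).le)
        have h3 : ∀ j, (Real.sqrt (A i j / qv j) * x j) ^ 2 = A i j / qv j * x j ^ 2 := by
          intro j
          rw [mul_pow, Real.sq_sqrt (div_nonneg (hA i j) (hqv j).le)]
        simp only [h1, h2, h3] at hCS
        have hmv : A.mulVec x i = ∑ j, A i j * x j := by
          simp [Matrix.mulVec, dotProduct]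
        rw [hmv]
        exact hCS.trans (mul_le_mul_of_nonneg_right (hrow i) (inner_nonneg i))
    _ = r * ∑ j, (x j ^ 2 / qv j) * (∑ i, A i j * pv i) := by
        simp only [Finset.mul_sum]
        rw [Finset.sum_comm]
        apply Finset.sum_congr rfl
        intro j _
        apply Finset.sum_congr rfl
        intro i _
        field_simp
    _ ≤ r * ∑ j, (x j ^ 2 / qv j) * (s * qv j) := by
        apply mul_le_mul_of_nonneg_left _ hr
        apply Finset.sum_le_sum
        intro j _
        exact mul_le_mul_of_nonneg_left (hcol j)
          (div_nonneg (sq_nonneg _) (hqv j).le)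
    _ = r * s * ∑ j, (x j)^2 := by
        have hterm : ∀ j, (x j ^ 2 / qv j) * (s * qv j) = s * x j ^ 2 := by
          intro j
          rw [div_eq_mul_inv,
            show x j ^ 2 * (qv j)⁻¹ * (s * qv j) = s * x j ^ 2 * (qv j * (qv j)⁻¹) by ring,
            mul_inv_cancel₀ (hqv j).ne', mul_one]
        simp only [hterm]
        rw [← Finset.mul_sum]
        ring

theorem stmt_7 (n p K : ℕ) (hn : 0 < n) (hp : 0 < p) (hK : 0 < K)
    (kw : Fin n → Fin K) (ll : Fin p → Fin K)
    (nsize : Fin K → ℕ)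
    (hnsize : ∀ a, nsize a = (Finset.univ.filter (fun i => kw i = a)).card)
    (hnpos : ∀ a, 0 < nsize a)
    (θ : Fin p → ℝ) (hθ : ∀ j, 0 < θ j)
    (hθsum : ∀ a, ∑ j ∈ Finset.univ.filter (fun j => ll j = a), θ j = 1)
    (C : Matrix (Fin K) (Fin K) ℝ) (hC : ∀ a b, 0 ≤ C a b)
    (Crow : Fin K → ℝ) (hCrow : ∀ a, Crow a = ∑ b, C a b)
    (Ccol : Fin K → ℝ) (hCcol : ∀ b, Ccol b = ∑ a, C a b)
    (Bb : Matrix (Fin n) (Fin p) ℝ)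
    (hBb : ∀ i j, Bb i j = θ j * C (kw i) (ll j) / (nsize (kw i) : ℝ))
    (lamw lamf : ℝ) (hlamf : 0 ≤ lamf) (hlamw : 0 < lamw)
    (hfpos : ∀ j, 0 < θ j * Ccol (ll j) + lamf)
    (Ee : Matrix (Fin n) (Fin p) ℝ)
    (hEe : Ee = Matrix.diagonal
        (fun i => 1 / Real.sqrt (Crow (kw i) / (nsize (kw i) : ℝ) + lamw)) * Bb *
      Matrix.diagonal (fun j => 1 / Real.sqrt (θ j * Ccol (ll j) + lamf)))
    (Lwl : Matrix (Fin n) (Fin n) ℝ) (hLwl : Lwl = 1 - Ee * Eeᵀ)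
    (maxd : ℝ)
    (hmaxd : maxd = Finset.univ.sup' ⟨⟨0, hK⟩, Finset.mem_univ _⟩
      (fun a => Crow a / (nsize a : ℝ))) :
    (∀ (μ : ℝ) (x : Fin n → ℝ), x ≠ 0 → Lwl.mulVec x = μ • x →
      lamw / (maxd + lamw) ≤ μ) ∧
    0 < lamw / (maxd + lamw) ∧
    specNorm Ee ≤ Real.sqrt (maxd / (maxd + lamw)) ∧
    Real.sqrt (maxd / (maxd + lamw)) < 1 := by
    -- positivity basics
  have hCrow0 : ∀ a, 0 ≤ Crow a := by
    intro a; rw [hCrow]; exact Finset.sum_nonneg fun b _ => hC a b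
  have hnn : ∀ a, (0:ℝ) < (nsize a : ℝ) := fun a => by exact_mod_cast hnpos a
  have hdpos : ∀ i, 0 < Crow (kw i) / (nsize (kw i) : ℝ) + lamw := fun i =>
    add_pos_of_nonneg_of_pos (div_nonneg (hCrow0 _) (hnn _).le) hlamw
  have hdle : ∀ a, Crow a / (nsize a : ℝ) ≤ maxd := by
    intro a; rw [hmaxd]
    exact Finset.le_sup' (fun a => Crow a / (nsize a : ℝ)) (Finset.mem_univ a)
  have hmaxd0 : 0 ≤ maxd :=
    le_trans (div_nonneg (hCrow0 ⟨0,hK⟩) (hnn _).le) (hdle ⟨0,hK⟩)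
  have hden : 0 < maxd + lamw := by linarith
  set r := maxd / (maxd + lamw) with hrdef
  have hr0 : 0 ≤ r := div_nonneg hmaxd0 hden.le
  have hr1 : r < 1 := (div_lt_one hden).2 (by linarith)
  -- matrix entries
  have hEent : ∀ i j, Ee i j = 1 / Real.sqrt (Crow (kw i) / (nsize (kw i) : ℝ) + lamw)
      * Bb i j * (1 / Real.sqrt (θ j * Ccol (ll j) + lamf)) := by
    intro i j
    rw [hEe, Matrix.mul_diagonal, Matrix.diagonal_mul]
  have hB0 : ∀ i j, 0 ≤ Bb i j := by
    intro i j; rw [hBb]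
    exact div_nonneg (mul_nonneg (hθ j).le (hC _ _)) (hnn _).le
  have hE0 : ∀ i j, 0 ≤ Ee i j := by
    intro i j; rw [hEent]
    have := hB0 i j
    positivity
  -- row sums of Bb
  have hBrow : ∀ i, ∑ j, Bb i j = Crow (kw i) / (nsize (kw i) : ℝ) := by
    intro i
    have h1 : ∑ j, θ j * C (kw i) (ll j) = Crow (kw i) := by
      rw [← Finset.sum_fiberwise Finset.univ ll (fun j => θ j * C (kw i) (ll j)), hCrow]
      apply Finset.sum_congr rfl
      intro b _
      have h2 : ∑ j ∈ Finset.univ.filter (fun j => ll j = b), θ j * C (kw i) (ll j)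
          = ∑ j ∈ Finset.univ.filter (fun j => ll j = b), θ j * C (kw i) b := by
        apply Finset.sum_congr rfl
        intro j hj
        rw [(Finset.mem_filter.1 hj).2]
      rw [h2, ← Finset.sum_mul, hθsum b, one_mul]
    simp only [hBb]
    rw [← Finset.sum_div, h1]
  -- column sums of Bb
  have hBcol : ∀ j, ∑ i, Bb i j = θ j * Ccol (ll j) := by
    intro j
    rw [← Finset.sum_fiberwise Finset.univ kw (fun i => Bb i j), hCcol, Finset.mul_sum]
    apply Finset.sum_congr rfl
    intro a _
    have h3 : ∀ i ∈ Finset.univ.filter (fun i => kw i = a),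
        Bb i j = θ j * C a (ll j) / (nsize a : ℝ) := by
      intro i hi
      rw [hBb, (Finset.mem_filter.1 hi).2]
    rw [Finset.sum_congr rfl h3, Finset.sum_const, ← hnsize a, nsmul_eq_mul,
      mul_comm, div_mul_cancel₀ _ (hnn a).ne']
  -- Schur test conditions
  have hrowE : ∀ i, ∑ j, Ee i j * Real.sqrt (θ j * Ccol (ll j) + lamf)
      ≤ r * Real.sqrt (Crow (kw i) / (nsize (kw i) : ℝ) + lamw) := by
    intro i
    have hsd : 0 < Real.sqrt (Crow (kw i) / (nsize (kw i) : ℝ) + lamw) :=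
      Real.sqrt_pos.2 (hdpos i)
    have e1 : ∀ j, Ee i j * Real.sqrt (θ j * Ccol (ll j) + lamf)
        = Bb i j * (1 / Real.sqrt (Crow (kw i) / (nsize (kw i) : ℝ) + lamw)) := by
      intro j
      rw [hEent]
      have hsf : Real.sqrt (θ j * Ccol (ll j) + lamf) ≠ 0 :=
        (Real.sqrt_pos.2 (hfpos j)).ne'
      field_simp
    calc ∑ j, Ee i j * Real.sqrt (θ j * Ccol (ll j) + lamf)
        = (∑ j, Bb i j) * (1 / Real.sqrt (Crow (kw i) / (nsize (kw i) : ℝ) + lamw)) := by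
          rw [Finset.sum_mul]
          exact Finset.sum_congr rfl fun j _ => e1 j
      _ = (Crow (kw i) / (nsize (kw i) : ℝ))
            / Real.sqrt (Crow (kw i) / (nsize (kw i) : ℝ) + lamw) := by
          rw [hBrow i]; ring
      _ ≤ r * Real.sqrt (Crow (kw i) / (nsize (kw i) : ℝ) + lamw) := by
          rw [div_le_iff₀ hsd, mul_assoc, Real.mul_self_sqrt (hdpos i).le, hrdef,
            div_mul_eq_mul_div, le_div_iff₀ hden]
          have hR := hdle (kw i)
          nlinarith [mul_le_mul_of_nonneg_left hR hlamw.le,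
            div_nonneg (hCrow0 (kw i)) (hnn (kw i)).le]
  have hcolE : ∀ j, ∑ i, Ee i j * Real.sqrt (Crow (kw i) / (nsize (kw i) : ℝ) + lamw)
      ≤ 1 * Real.sqrt (θ j * Ccol (ll j) + lamf) := by
    intro j
    have hsf : 0 < Real.sqrt (θ j * Ccol (ll j) + lamf) := Real.sqrt_pos.2 (hfpos j)
    have e1 : ∀ i, Ee i j * Real.sqrt (Crow (kw i) / (nsize (kw i) : ℝ) + lamw)
        = Bb i j * (1 / Real.sqrt (θ j * Ccol (ll j) + lamf)) := by
      intro i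
      rw [hEent]
      have hsd : Real.sqrt (Crow (kw i) / (nsize (kw i) : ℝ) + lamw) ≠ 0 :=
        (Real.sqrt_pos.2 (hdpos i)).ne'
      field_simp
    calc ∑ i, Ee i j * Real.sqrt (Crow (kw i) / (nsize (kw i) : ℝ) + lamw)
        = (∑ i, Bb i j) * (1 / Real.sqrt (θ j * Ccol (ll j) + lamf)) := by
          rw [Finset.sum_mul]
          exact Finset.sum_congr rfl fun i _ => e1 i
      _ = (θ j * Ccol (ll j)) / Real.sqrt (θ j * Ccol (ll j) + lamf) := by
          rw [hBcol j]; ring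
      _ ≤ 1 * Real.sqrt (θ j * Ccol (ll j) + lamf) := by
          rw [one_mul, div_le_iff₀ hsf, Real.mul_self_sqrt (hfpos j).le]
          linarith
  -- quadratic bounds via Schur test
  have hquadE : ∀ x : Fin p → ℝ, ∑ i, (Ee.mulVec x i)^2 ≤ r * 1 * ∑ j, (x j)^2 :=
    fun x => schur_test Ee hE0
      (fun i => Real.sqrt (Crow (kw i) / (nsize (kw i) : ℝ) + lamw))
      (fun j => Real.sqrt (θ j * Ccol (ll j) + lamf))
      (fun i => Real.sqrt_pos.2 (hdpos i)) (fun j => Real.sqrt_pos.2 (hfpos j))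
      r 1 hr0 hrowE hcolE x
  have hquadET : ∀ x : Fin n → ℝ, ∑ j, (Eeᵀ.mulVec x j)^2 ≤ 1 * r * ∑ i, (x i)^2 :=
    fun x => schur_test Eeᵀ (fun j i => hE0 i j)
      (fun j => Real.sqrt (θ j * Ccol (ll j) + lamf))
      (fun i => Real.sqrt (Crow (kw i) / (nsize (kw i) : ℝ) + lamw))
      (fun j => Real.sqrt_pos.2 (hfpos j)) (fun i => Real.sqrt_pos.2 (hdpos i))
      1 r zero_le_one
      (fun j => hcolE j) (fun i => hrowE i) x
  have h1r : lamw / (maxd + lamw) = 1 - r := by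
    rw [hrdef]; field_simp; ring
  refine ⟨?_, ?_, ?_, ?_⟩
  · -- eigenvalue bound
    intro μ x hx hμx
    have hS : 0 < ∑ i, (x i)^2 := by
      obtain ⟨i0, hi0⟩ := Function.ne_iff.1 hx
      have hi0' : x i0 ≠ 0 := by simpa using hi0
      exact Finset.sum_pos' (fun i _ => sq_nonneg _)
        ⟨i0, Finset.mem_univ _, by rcases hi0'.lt_or_gt with h | h <;> nlinarith⟩
    have hkey : μ * ∑ i, (x i)^2 = (∑ i, (x i)^2) - ∑ j, (Eeᵀ.mulVec x j)^2 := by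
      have h1 : x ⬝ᵥ Lwl.mulVec x = x ⬝ᵥ (μ • x) := by rw [hμx]
      rw [hLwl, Matrix.sub_mulVec, Matrix.one_mulVec, dotProduct_sub,
        ← Matrix.mulVec_mulVec, dotProduct_mulVec,
        ← Matrix.mulVec_transpose] at h1
      have h2 : x ⬝ᵥ (μ • x) = μ * ∑ i, (x i)^2 := by
        simp only [dotProduct, Pi.smul_apply, smul_eq_mul]
        rw [Finset.mul_sum]
        exact Finset.sum_congr rfl fun i _ => by ring
      have h3 : x ⬝ᵥ x = ∑ i, (x i)^2 := by
        simp [dotProduct, sq]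
      have h4 : (Eeᵀ *ᵥ x) ⬝ᵥ (Eeᵀ *ᵥ x) = ∑ j, (Eeᵀ.mulVec x j)^2 := by
        simp [dotProduct, sq]
      rw [h2, h3, h4] at h1
      linarith [h1]
    have hT := hquadET x
    rw [h1r]
    have h5 : (1 - r) * (∑ i, (x i)^2) ≤ μ * (∑ i, (x i)^2) := by nlinarith
    exact le_of_mul_le_mul_right (by linarith [h5]) hS
  · rw [h1r]; linarith
  · -- spectral norm bound
    unfold specNorm
    apply ContinuousLinearMap.opNorm_le_bound _ (Real.sqrt_nonneg _)
    intro x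
    rw [LinearMap.coe_toContinuousLinearMap', Matrix.toEuclideanLin_apply,
      EuclideanSpace.norm_eq, EuclideanSpace.norm_eq]
    simp only [PiLp.toLp_apply, Real.norm_eq_abs, sq_abs]
    rw [← Real.sqrt_mul hr0]
    apply Real.sqrt_le_sqrt
    have := hquadE ((WithLp.equiv 2 (Fin p → ℝ)) x)
    simpa using this
  · have h6 : Real.sqrt r < Real.sqrt 1 := Real.sqrt_lt_sqrt hr0 (by simpa using hr1)
    rwa [Real.sqrt_one] at h6
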